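/- arXiv:2209.10028 — 7 statements merged into one kernel-verified Lean document; each statement's English description precedes it below -/
import Mathlib

section
/- There exists a quasi-metric on a set of four points, taking values in {0,1,2,3}, which has no universal line and has fewer than four distinct lines (hence fails the de Bruijn–Erdős property). -/
/-- A quasi-metric on `V`: nonnegative, vanishing exactly on the diagonal,
and satisfying the (directed) triangle inequality. -/
def IsQuasiMetric {V : Type*} (d : V → V → ℝ) : Prop :=
  (∀ x y, 0 ≤ d x y) ∧ (∀ x y, d x y = 0 ↔ x = y) ∧ (∀ x y z, d x z ≤ d x y + d y z)

/-- Betweenness: `y` lies between `x` and `z` (all three pairwise distinct). -/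
def BtwQM {V : Type*} (d : V → V → ℝ) (x y z : V) : Prop :=
  x ≠ y ∧ y ≠ z ∧ x ≠ z ∧ d x z = d x y + d y z

/-- The line through `x` and `y`. -/
def lineQM {V : Type*} (d : V → V → ℝ) (x y : V) : Set V :=
  {z | d z y = d z x + d x y ∨ d x y = d x z + d z y ∨ d x z = d x y + d y z}

/-- The set of all lines of the space. -/
def linesQM {V : Type*} (d : V → V → ℝ) : Set (Set V) :=
  {ℓ | ∃ x y, x ≠ y ∧ ℓ = lineQM d x y}

/-- The natural-number distance matrix of our example. -/
def DEx : Fin 4 → Fin 4 → ℕ :=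
  ![![0, 1, 1, 2], ![1, 0, 2, 1], ![3, 2, 0, 2], ![2, 3, 2, 0]]

/-- The real-valued quasi-metric of our example. -/
noncomputable def dEx : Fin 4 → Fin 4 → ℝ := fun x y => (DEx x y : ℝ)

/-- The natural-number line predicate. -/
def PEx (x y z : Fin 4) : Prop :=
  DEx z y = DEx z x + DEx x y ∨ DEx x y = DEx x z + DEx z y ∨ DEx x z = DEx x y + DEx y z

instance : DecidablePred fun t : Fin 4 × Fin 4 × Fin 4 => PEx t.1 t.2.1 t.2.2 := by
  intro t; unfold PEx; infer_instance

instance (x y z : Fin 4) : Decidable (PEx x y z) := by unfold PEx; infer_instance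

lemma mem_lineEx (x y z : Fin 4) : z ∈ lineQM dEx x y ↔ PEx x y z := by
  simp only [lineQM, dEx, Set.mem_setOf_eq, PEx, ← Nat.cast_add, Nat.cast_inj]

lemma lineEx_eq (x y : Fin 4) : lineQM dEx x y = {z | PEx x y z} := by
  ext z; exact mem_lineEx x y z

/-- there is a quasi-metric on a four-element set, with values in
`{0,1,2,3}`, having no universal line and fewer than four distinct lines. -/
theorem stmt_3 :
    ∃ (V : Type) (_ : Fintype V) (d : V → V → ℝ),
      Fintype.card V = 4 ∧
      IsQuasiMetric d ∧
      (∀ x y, d x y ∈ ({0, 1, 2, 3} : Set ℝ)) ∧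
      (∀ x y : V, x ≠ y → lineQM d x y ≠ Set.univ) ∧
      (linesQM d).ncard < 4 := by
  refine ⟨Fin 4, inferInstance, dEx, by simp, ⟨?_, ?_, ?_⟩, ?_, ?_, ?_⟩
  · intro x y; exact Nat.cast_nonneg _
  · intro x y
    have h : ∀ a b : Fin 4, DEx a b = 0 ↔ a = b := by decide
    simpa [dEx, Nat.cast_eq_zero] using h x y
  · intro x y z
    have h : ∀ a b c : Fin 4, DEx a c ≤ DEx a b + DEx b c := by decide
    simp only [dEx]; exact_mod_cast h x y z
  · intro x y
    have h : ∀ a b : Fin 4, DEx a b = 0 ∨ DEx a b = 1 ∨ DEx a b = 2 ∨ DEx a b = 3 := by decide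
    rcases h x y with h' | h' | h' | h' <;> simp [dEx, h', Set.mem_insert_iff]
  · intro x y hxy h
    have hall : ∀ z, PEx x y z := fun z => (mem_lineEx x y z).mp (h ▸ Set.mem_univ z)
    have hkey : ∀ a b : Fin 4, a ≠ b → ¬ ∀ z, PEx a b z := by decide
    exact hkey x y hxy hall
  · have hsub : linesQM dEx ⊆
        ({{z : Fin 4 | z ≠ 2}, {z : Fin 4 | z = 2 ∨ z = 3}, {z : Fin 4 | z ≠ 3}} :
          Set (Set (Fin 4))) := by
      rintro ℓ ⟨x, y, hxy, rfl⟩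
      rw [lineEx_eq]
      have hkey : ∀ a b : Fin 4, a ≠ b →
          (∀ z, PEx a b z ↔ z ≠ 2) ∨ (∀ z, PEx a b z ↔ (z = 2 ∨ z = 3)) ∨
          (∀ z, PEx a b z ↔ z ≠ 3) := by decide
      rcases hkey x y hxy with h | h | h
      · left; ext z; exact h z
      · right; left; ext z; exact h z
      · right; right; ext z; exact h z
    have hfin : ({{z : Fin 4 | z ≠ 2}, {z : Fin 4 | z = 2 ∨ z = 3}, {z : Fin 4 | z ≠ 3}} :
        Set (Set (Fin 4))).Finite :=
      (((Set.finite_singleton _).insert _).insert _)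
    calc (linesQM dEx).ncard ≤ _ := Set.ncard_le_ncard hsub hfin
      _ ≤ 3 := by
        refine le_trans (Set.ncard_insert_le _ _) ?_
        have := Set.ncard_insert_le ({z : Fin 4 | z = 2 ∨ z = 3}) ({{z : Fin 4 | z ≠ 3}} : Set (Set (Fin 4)))
        simp [Set.ncard_singleton] at this ⊢
        omega
      _ < 4 := by norm_num
end

section
/- Every metric space on four points has the de Bruijn–Erdős property: it has a universal line or at least four distinct lines. -/
section Aux

variable {V : Type} (d : V → V → ℝ)

lemma memL_aux (h0 : ∀ x, d x x = 0) (x y : V) : x ∈ lineQM d x y := by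
  simp only [lineQM, Set.mem_setOf_eq]
  left; rw [h0]; ring

lemma memR_aux (h0 : ∀ x, d x x = 0) (x y : V) : y ∈ lineQM d x y := by
  simp only [lineQM, Set.mem_setOf_eq]
  right; right; rw [h0]; ring

lemma comm_aux (hsymm : ∀ x y, d x y = d y x) (x y : V) :
    lineQM d x y = lineQM d y x := by
  ext z
  simp only [lineQM, Set.mem_setOf_eq]
  constructor
  · rintro (h | h | h)
    · right; right
      have := hsymm z y; have := hsymm z x; have := hsymm x y; linarith
    · right; left
      have := hsymm x y; have := hsymm x z; have := hsymm z y; linarith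
    · left
      have := hsymm x z; have := hsymm x y; have := hsymm y z; linarith
  · rintro (h | h | h)
    · right; right
      have := hsymm z x; have := hsymm z y; have := hsymm y x; linarith
    · right; left
      have := hsymm y x; have := hsymm y z; have := hsymm z x; linarith
    · left
      have := hsymm y z; have := hsymm y x; have := hsymm x z; linarith

lemma exch_aux (hsymm : ∀ x y, d x y = d y x) (a b c : V) :
    c ∈ lineQM d a b ↔ b ∈ lineQM d a c := by
  simp only [lineQM, Set.mem_setOf_eq]
  constructor
  · rintro (h | h | h)
    · left
      have := hsymm c b; have := hsymm c a; have := hsymm a b; linarith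
    · exact Or.inr (Or.inr h)
    · exact Or.inr (Or.inl h)
  · rintro (h | h | h)
    · left
      have := hsymm b c; have := hsymm b a; have := hsymm a c; linarith
    · exact Or.inr (Or.inr h)
    · exact Or.inr (Or.inl h)

lemma univ_aux {x y z w : V} (cover : ∀ v : V, v = x ∨ v = y ∨ v = z ∨ v = w)
    {a b : V} (hx : x ∈ lineQM d a b) (hy : y ∈ lineQM d a b)
    (hz : z ∈ lineQM d a b) (hw : w ∈ lineQM d a b) :
    lineQM d a b = Set.univ := by
  ext v
  simp only [Set.mem_univ, iff_true]
  rcases cover v with rfl | rfl | rfl | rfl <;> assumption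

lemma card_aux [Fintype V] {L1 L2 L3 L4 : Set V}
    (m1 : L1 ∈ linesQM d) (m2 : L2 ∈ linesQM d)
    (m3 : L3 ∈ linesQM d) (m4 : L4 ∈ linesQM d)
    (h12 : L1 ≠ L2) (h13 : L1 ≠ L3) (h14 : L1 ≠ L4)
    (h23 : L2 ≠ L3) (h24 : L2 ≠ L4) (h34 : L3 ≠ L4) :
    4 ≤ (linesQM d).ncard := by
  classical
  have hsub : ({L1, L2, L3, L4} : Set (Set V)) ⊆ linesQM d := by
    intro L hL
    simp only [Set.mem_insert_iff, Set.mem_singleton_iff] at hL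
    rcases hL with rfl | rfl | rfl | rfl <;> assumption
  have hcard : ({L1, L2, L3, L4} : Set (Set V)).ncard = 4 := by
    rw [Set.ncard_insert_of_notMem (by simp [h12, h13, h14]),
      Set.ncard_insert_of_notMem (by simp [h23, h24]),
      Set.ncard_insert_of_notMem (by simp [h34]), Set.ncard_singleton]
  calc 4 = ({L1, L2, L3, L4} : Set (Set V)).ncard := hcard.symm
    _ ≤ (linesQM d).ncard := Set.ncard_le_ncard hsub (Set.toFinite _)

lemma main_aux [Fintype V] (h0 : ∀ x, d x x = 0) (hsymm : ∀ x y, d x y = d y x)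
    (x y z w : V)
    (hxy : x ≠ y) (hxz : x ≠ z) (hxw : x ≠ w) (hyz : y ≠ z) (hyw : y ≠ w) (hzw : z ≠ w)
    (cover : ∀ v : V, v = x ∨ v = y ∨ v = z ∨ v = w)
    (hnu : ∀ p q : V, p ≠ q → lineQM d p q ≠ Set.univ)
    (hc : lineQM d x y = lineQM d x z) :
    4 ≤ (linesQM d).ncard := by
  have memL := memL_aux d h0
  have memR := memR_aux d h0
  have comm := comm_aux d hsymm
  have exch := exch_aux d hsymm
  -- z lies on the line through x and y
  have hz : z ∈ lineQM d x y := by rw [hc]; exact memR x z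
  -- w is not on the line through x and y
  have hwxy : w ∉ lineQM d x y := fun hw =>
    hnu x y hxy (univ_aux d cover (memL x y) (memR x y) hz hw)
  -- x lies on the line through y and z
  have hxYZ : x ∈ lineQM d y z := by
    have : z ∈ lineQM d y x := by rw [← comm x y]; exact hz
    exact (exch y x z).mp this
  -- w is not on the line through y and z
  have hwyz : w ∉ lineQM d y z := fun hw =>
    hnu y z hyz (univ_aux d cover hxYZ (memL y z) (memR y z) hw)
  -- the four lines
  have n1 : lineQM d x y ≠ lineQM d x w := fun h => hwxy (h ▸ memR x w)
  have n2 : lineQM d x y ≠ lineQM d y w := fun h => hwxy (h ▸ memR y w)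
  have n3 : lineQM d x y ≠ lineQM d z w := fun h => hwxy (h ▸ memR z w)
  have n4 : lineQM d x w ≠ lineQM d y w := by
    intro h
    have hxl : x ∈ lineQM d y w := by rw [← h]; exact memL x w
    have : w ∈ lineQM d y x := (exch y w x).mp hxl
    rw [← comm x y] at this
    exact hwxy this
  have n5 : lineQM d x w ≠ lineQM d z w := by
    intro h
    have hxl : x ∈ lineQM d z w := by rw [← h]; exact memL x w
    have : w ∈ lineQM d z x := (exch z w x).mp hxl
    rw [← comm x z, ← hc] at this
    exact hwxy this
  have n6 : lineQM d y w ≠ lineQM d z w := by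
    intro h
    have hyl : y ∈ lineQM d z w := by rw [← h]; exact memL y w
    have : w ∈ lineQM d z y := (exch z w y).mp hyl
    rw [← comm y z] at this
    exact hwyz this
  exact card_aux d ⟨x, y, hxy, rfl⟩ ⟨x, w, hxw, rfl⟩ ⟨y, w, hyw, rfl⟩ ⟨z, w, hzw, rfl⟩
    n1 n2 n3 n4 n5 n6

end Aux

/-- every metric space on four points has the de Bruijn–Erdős
property: a universal line or at least four distinct lines. -/
theorem stmt_8 (V : Type) [Fintype V] (hV : Fintype.card V = 4)
    (d : V → V → ℝ) (hd : IsQuasiMetric d) (hsymm : ∀ x y, d x y = d y x) :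
    (∃ x y : V, x ≠ y ∧ lineQM d x y = Set.univ) ∨ 4 ≤ (linesQM d).ncard := by
  classical
  by_cases hu : ∃ x y : V, x ≠ y ∧ lineQM d x y = Set.univ
  · exact Or.inl hu
  right
  push_neg at hu
  have h0 : ∀ x : V, d x x = 0 := fun x => (hd.2.1 x x).mpr rfl
  have memL := memL_aux d h0
  have memR := memR_aux d h0
  have comm := comm_aux d hsymm
  -- enumerate the four points
  obtain ⟨e⟩ : Nonempty (V ≃ Fin 4) := by
    rw [← Fintype.card_eq, hV, Fintype.card_fin]
  set p0 := e.symm 0 with hp0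
  set p1 := e.symm 1 with hp1
  set p2 := e.symm 2 with hp2
  set p3 := e.symm 3 with hp3
  have cover : ∀ v : V, v = p0 ∨ v = p1 ∨ v = p2 ∨ v = p3 := by
    intro v
    have hfin : ∀ i : Fin 4, i = 0 ∨ i = 1 ∨ i = 2 ∨ i = 3 := by decide
    rcases hfin (e v) with h | h | h | h <;>
      [left; (right; left); (right; right; left); (right; right; right)] <;>
      exact e.injective (by simp [h, hp0, hp1, hp2, hp3])
  have inj := e.symm.injective
  have d01 : p0 ≠ p1 := inj.ne (by decide)
  have d02 : p0 ≠ p2 := inj.ne (by decide)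
  have d03 : p0 ≠ p3 := inj.ne (by decide)
  have d12 : p1 ≠ p2 := inj.ne (by decide)
  have d13 : p1 ≠ p3 := inj.ne (by decide)
  have d23 : p2 ≠ p3 := inj.ne (by decide)
  -- case analysis on coincidences of lines
  by_cases h1 : lineQM d p0 p1 = lineQM d p0 p2
  · exact main_aux d h0 hsymm p0 p1 p2 p3 d01 d02 d03 d12 d13 d23 cover hu h1
  by_cases h2 : lineQM d p0 p1 = lineQM d p0 p3
  · exact main_aux d h0 hsymm p0 p1 p3 p2 d01 d03 d02 d13 d12 (Ne.symm d23)
      (fun v => by rcases cover v with h | h | h | h <;> tauto) hu h2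
  by_cases h3 : lineQM d p1 p0 = lineQM d p1 p2
  · exact main_aux d h0 hsymm p1 p0 p2 p3 (Ne.symm d01) d12 d13 d02 d03 d23
      (fun v => by rcases cover v with h | h | h | h <;> tauto) hu h3
  by_cases h4 : lineQM d p0 p2 = lineQM d p0 p3
  · exact main_aux d h0 hsymm p0 p2 p3 p1 d02 d03 d01 d23 (Ne.symm d12) (Ne.symm d13)
      (fun v => by rcases cover v with h | h | h | h <;> tauto) hu h4
  by_cases h5 : lineQM d p2 p0 = lineQM d p2 p1
  · exact main_aux d h0 hsymm p2 p0 p1 p3 (Ne.symm d02) (Ne.symm d12) d23 d01 d03 d13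
      (fun v => by rcases cover v with h | h | h | h <;> tauto) hu h5
  -- all relevant lines distinct
  have h6 : lineQM d p0 p3 ≠ lineQM d p1 p2 := by
    intro h
    apply hu p0 p3 d03
    refine univ_aux d cover (memL p0 p3) ?_ ?_ (memR p0 p3)
    · rw [h]; exact memL p1 p2
    · rw [h]; exact memR p1 p2
  have h3' : lineQM d p0 p1 ≠ lineQM d p1 p2 := by
    rw [comm p0 p1]; exact h3
  have h5' : lineQM d p0 p2 ≠ lineQM d p1 p2 := by
    rw [comm p0 p2, comm p1 p2]; exact h5
  exact card_aux d ⟨p0, p1, d01, rfl⟩ ⟨p0, p2, d02, rfl⟩ ⟨p0, p3, d03, rfl⟩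
    ⟨p1, p2, d12, rfl⟩ h1 h2 h3' h4 h5' h6
end

section
/- Every quasi-metric space on four points with all distances in {0,1,2} has the de Bruijn–Erdős property: it has a universal line or at least four distinct lines. -/
/- ### Auxiliary boolean checker -/

private def pIdx (i j : ℕ) : ℕ := 3 * i + (if j < i then j else j - 1)

private def Dv (L : List Bool) (i j : ℕ) : ℕ :=
  if i = j then 0 else if L.getD (pIdx i j) true then 1 else 2

private def memB (L : List Bool) (x y z : ℕ) : Bool :=
  (Dv L z y == Dv L z x + Dv L x y) || (Dv L x y == Dv L x z + Dv L z y) ||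
  (Dv L x z == Dv L x y + Dv L y z)

private def lineMask (L : List Bool) (x y : ℕ) : ℕ :=
  (cond (memB L x y 0) 1 0) + 2 * (cond (memB L x y 1) 1 0) +
  4 * (cond (memB L x y 2) 1 0) + 8 * (cond (memB L x y 3) 1 0)

private def masks (L : List Bool) : List ℕ :=
  [lineMask L 0 1, lineMask L 0 2, lineMask L 0 3, lineMask L 1 0, lineMask L 1 2,
   lineMask L 1 3, lineMask L 2 0, lineMask L 2 1, lineMask L 2 3, lineMask L 3 0,
   lineMask L 3 1, lineMask L 3 2]

private def checkN (L : List Bool) : Bool :=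
  ((masks L).any (· == 15)) || 4 ≤ (masks L).dedup.length

private def allLists : ℕ → List (List Bool)
  | 0 => [[]]
  | k + 1 => (allLists k).flatMap (fun l => [true :: l, false :: l])

private lemma mem_allLists : ∀ (k : ℕ) (l : List Bool), l.length = k → l ∈ allLists k := by
  intro k
  induction k with
  | zero => intro l hl; simp [List.length_eq_zero_iff] at hl; simp [hl, allLists]
  | succ k ih =>
    intro l hl
    match l with
    | b :: t =>
      simp only [List.length_cons, Nat.succ_inj] at hl
      have ht := ih t hl
      simp only [allLists, List.mem_flatMap]
      exact ⟨t, ht, by cases b <;> simp⟩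

set_option maxRecDepth 100000 in
set_option maxHeartbeats 10000000 in
private lemma chk0 : ((allLists 8).all fun l => checkN (false::false::false::false::l)) = true := by decide

set_option maxRecDepth 100000 in
set_option maxHeartbeats 10000000 in
private lemma chk1 : ((allLists 8).all fun l => checkN (true::false::false::false::l)) = true := by decide

set_option maxRecDepth 100000 in
set_option maxHeartbeats 10000000 in
private lemma chk2 : ((allLists 8).all fun l => checkN (false::true::false::false::l)) = true := by decide

set_option maxRecDepth 100000 in
set_option maxHeartbeats 10000000 in
private lemma chk3 : ((allLists 8).all fun l => checkN (true::true::false::false::l)) = true := by decide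

set_option maxRecDepth 100000 in
set_option maxHeartbeats 10000000 in
private lemma chk4 : ((allLists 8).all fun l => checkN (false::false::true::false::l)) = true := by decide

set_option maxRecDepth 100000 in
set_option maxHeartbeats 10000000 in
private lemma chk5 : ((allLists 8).all fun l => checkN (true::false::true::false::l)) = true := by decide

set_option maxRecDepth 100000 in
set_option maxHeartbeats 10000000 in
private lemma chk6 : ((allLists 8).all fun l => checkN (false::true::true::false::l)) = true := by decide

set_option maxRecDepth 100000 in
set_option maxHeartbeats 10000000 in
private lemma chk7 : ((allLists 8).all fun l => checkN (true::true::true::false::l)) = true := by decide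

set_option maxRecDepth 100000 in
set_option maxHeartbeats 10000000 in
private lemma chk8 : ((allLists 8).all fun l => checkN (false::false::false::true::l)) = true := by decide

set_option maxRecDepth 100000 in
set_option maxHeartbeats 10000000 in
private lemma chk9 : ((allLists 8).all fun l => checkN (true::false::false::true::l)) = true := by decide

set_option maxRecDepth 100000 in
set_option maxHeartbeats 10000000 in
private lemma chk10 : ((allLists 8).all fun l => checkN (false::true::false::true::l)) = true := by decide

set_option maxRecDepth 100000 in
set_option maxHeartbeats 10000000 in
private lemma chk11 : ((allLists 8).all fun l => checkN (true::true::false::true::l)) = true := by decide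

set_option maxRecDepth 100000 in
set_option maxHeartbeats 10000000 in
private lemma chk12 : ((allLists 8).all fun l => checkN (false::false::true::true::l)) = true := by decide

set_option maxRecDepth 100000 in
set_option maxHeartbeats 10000000 in
private lemma chk13 : ((allLists 8).all fun l => checkN (true::false::true::true::l)) = true := by decide

set_option maxRecDepth 100000 in
set_option maxHeartbeats 10000000 in
private lemma chk14 : ((allLists 8).all fun l => checkN (false::true::true::true::l)) = true := by decide

set_option maxRecDepth 100000 in
set_option maxHeartbeats 10000000 in
private lemma chk15 : ((allLists 8).all fun l => checkN (true::true::true::true::l)) = true := by decide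

private lemma checkN_true (l : List Bool) (hl : l.length = 12) : checkN l = true := by
  match l with
  | b0 :: b1 :: b2 :: b3 :: t =>
    have ht : t.length = 8 := by simpa using hl
    have hmem := mem_allLists 8 t ht
    cases b0 <;> cases b1 <;> cases b2 <;> cases b3 <;>
      [ exact List.all_eq_true.mp chk0 t hmem;
        exact List.all_eq_true.mp chk8 t hmem;
        exact List.all_eq_true.mp chk4 t hmem;
        exact List.all_eq_true.mp chk12 t hmem;
        exact List.all_eq_true.mp chk2 t hmem;
        exact List.all_eq_true.mp chk10 t hmem;
        exact List.all_eq_true.mp chk6 t hmem;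
        exact List.all_eq_true.mp chk14 t hmem;
        exact List.all_eq_true.mp chk1 t hmem;
        exact List.all_eq_true.mp chk9 t hmem;
        exact List.all_eq_true.mp chk5 t hmem;
        exact List.all_eq_true.mp chk13 t hmem;
        exact List.all_eq_true.mp chk3 t hmem;
        exact List.all_eq_true.mp chk11 t hmem;
        exact List.all_eq_true.mp chk7 t hmem;
        exact List.all_eq_true.mp chk15 t hmem ]

private lemma mask15 : ∀ p q r s : Bool,
    (cond p 1 0 + 2 * cond q 1 0 + 4 * cond r 1 0 + 8 * cond s 1 0 = 15) →
    p = true ∧ q = true ∧ r = true ∧ s = true := by decide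

/-- every quasi-metric space on four points with distances in
`{0, 1, 2}` has the de Bruijn–Erdős property. -/
theorem stmt_9 (V : Type) [Fintype V] (hV : Fintype.card V = 4)
    (d : V → V → ℝ) (hd : IsQuasiMetric d)
    (hval : ∀ x y, d x y ∈ ({0, 1, 2} : Set ℝ)) :
    (∃ x y : V, x ≠ y ∧ lineQM d x y = Set.univ) ∨ 4 ≤ (linesQM d).ncard := by
  classical
  obtain ⟨hnn, hzero, htri⟩ := hd
  let e : V ≃ Fin 4 := Fintype.equivFinOfCardEq hV
  set g : Fin 4 → Fin 4 → Bool :=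
    fun i j => if d (e.symm i) (e.symm j) = 1 then true else false with hg
  set L : List Bool :=
    [g 0 1, g 0 2, g 0 3, g 1 0, g 1 2, g 1 3, g 2 0, g 2 1, g 2 3, g 3 0, g 3 1, g 3 2]
    with hL
  -- the distances agree
  have hD : ∀ i j : Fin 4, (Dv L i.val j.val : ℝ) = d (e.symm i) (e.symm j) := by
    intro i j
    by_cases hij : i = j
    · subst hij
      have : Dv L i.val i.val = 0 := by simp [Dv]
      rw [this, (hzero _ _).mpr rfl]; simp
    · have hget : L.getD (pIdx i.val j.val) true = g i j := by
        fin_cases i <;> fin_cases j <;> first | (exact absurd rfl hij) | rfl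
      have hne : e.symm i ≠ e.symm j := fun h => hij (e.symm.injective h)
      have hd0 : d (e.symm i) (e.symm j) ≠ 0 := fun h => hne ((hzero _ _).mp h)
      have hDv : Dv L i.val j.val = if g i j then 1 else 2 := by
        have hijv : i.val ≠ j.val := fun h => hij (Fin.val_injective h)
        rw [Dv, if_neg hijv, hget]
      rw [hDv]
      by_cases h1 : d (e.symm i) (e.symm j) = 1
      · simp [hg, h1]
      · have h2 : d (e.symm i) (e.symm j) = 2 := by
          rcases hval (e.symm i) (e.symm j) with h | h | h
          · exact absurd h hd0
          · exact absurd h h1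
          · exact h
        simp [hg, h1, h2]
  -- membership in lines corresponds to the boolean test
  have hmem : ∀ x y z : Fin 4,
      memB L x.val y.val z.val = true ↔ e.symm z ∈ lineQM d (e.symm x) (e.symm y) := by
    intro x y z
    simp only [memB, Bool.or_eq_true, beq_iff_eq, lineQM, Set.mem_setOf_eq, ← hD]
    constructor
    · rintro ((h | h) | h)
      · exact Or.inl (by exact_mod_cast h)
      · exact Or.inr (Or.inl (by exact_mod_cast h))
      · exact Or.inr (Or.inr (by exact_mod_cast h))
    · rintro (h | h | h)
      · exact Or.inl (Or.inl (by exact_mod_cast h))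
      · exact Or.inl (Or.inr (by exact_mod_cast h))
      · exact Or.inr (by exact_mod_cast h)
  have hcheck : checkN L = true := checkN_true L (by simp [hL])
  rw [checkN, Bool.or_eq_true] at hcheck
  rcases hcheck with huniv | hcount
  · -- a universal line exists
    left
    rw [List.any_eq_true] at huniv
    obtain ⟨m, hmL, hm15⟩ := huniv
    rw [beq_iff_eq] at hm15
    -- helper for any pair
    have key : ∀ x y : Fin 4, x ≠ y → lineMask L x.val y.val = 15 →
        ∃ a b : V, a ≠ b ∧ lineQM d a b = Set.univ := by
      intro x y hxy hmask
      refine ⟨e.symm x, e.symm y, fun h => hxy (e.symm.injective h), ?_⟩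
      rw [lineMask] at hmask
      obtain ⟨m0, m1, m2, m3⟩ := mask15 _ _ _ _ hmask
      have hall : ∀ z : Fin 4, memB L x.val y.val z.val = true := by
        intro z; fin_cases z <;> assumption
      rw [Set.eq_univ_iff_forall]
      intro v
      have := (hmem x y (e v)).mp (hall (e v))
      rwa [Equiv.symm_apply_apply] at this
    subst hm15
    simp only [masks, List.mem_cons, List.not_mem_nil, or_false] at hmL
    rcases hmL with h | h | h | h | h | h | h | h | h | h | h | h <;>
      [ exact key 0 1 (by decide) h.symm; exact key 0 2 (by decide) h.symm;
        exact key 0 3 (by decide) h.symm; exact key 1 0 (by decide) h.symm;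
        exact key 1 2 (by decide) h.symm; exact key 1 3 (by decide) h.symm;
        exact key 2 0 (by decide) h.symm; exact key 2 1 (by decide) h.symm;
        exact key 2 3 (by decide) h.symm; exact key 3 0 (by decide) h.symm;
        exact key 3 1 (by decide) h.symm; exact key 3 2 (by decide) h.symm ]
  · -- at least 4 lines
    right
    rw [decide_eq_true_eq] at hcount
    -- the "fingerprint" of a set of vertices
    set μ : Set V → ℕ := fun S =>
      (if e.symm 0 ∈ S then 1 else 0) + 2 * (if e.symm 1 ∈ S then 1 else 0) +
      4 * (if e.symm 2 ∈ S then 1 else 0) + 8 * (if e.symm 3 ∈ S then 1 else 0) with hμdef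
    have hline : ∀ x y : Fin 4,
        μ (lineQM d (e.symm x) (e.symm y)) = lineMask L x.val y.val := by
      intro x y
      have h0 : (e.symm 0 ∈ lineQM d (e.symm x) (e.symm y)) ↔ memB L x.val y.val 0 = true :=
        (hmem x y 0).symm
      have h1 : (e.symm 1 ∈ lineQM d (e.symm x) (e.symm y)) ↔ memB L x.val y.val 1 = true :=
        (hmem x y 1).symm
      have h2 : (e.symm 2 ∈ lineQM d (e.symm x) (e.symm y)) ↔ memB L x.val y.val 2 = true :=
        (hmem x y 2).symm
      have h3 : (e.symm 3 ∈ lineQM d (e.symm x) (e.symm y)) ↔ memB L x.val y.val 3 = true :=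
        (hmem x y 3).symm
      rw [hμdef, lineMask]
      simp only [h0, h1, h2, h3, Bool.cond_eq_ite]
    have hsub : (↑(masks L).toFinset : Set ℕ) ⊆ μ '' linesQM d := by
      intro m hm
      simp only [Finset.coe_sort_coe, List.coe_toFinset, Set.mem_setOf_eq, List.mem_toFinset] at hm
      have key : ∀ x y : Fin 4, x ≠ y → lineMask L x.val y.val ∈ μ '' linesQM d := by
        intro x y hxy
        exact ⟨lineQM d (e.symm x) (e.symm y),
          ⟨e.symm x, e.symm y, fun h => hxy (e.symm.injective h), rfl⟩, hline x y⟩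
      simp only [masks, List.mem_cons, List.not_mem_nil, or_false] at hm
      rcases hm with h | h | h | h | h | h | h | h | h | h | h | h <;> subst h <;>
        [ exact key 0 1 (by decide); exact key 0 2 (by decide);
          exact key 0 3 (by decide); exact key 1 0 (by decide);
          exact key 1 2 (by decide); exact key 1 3 (by decide);
          exact key 2 0 (by decide); exact key 2 1 (by decide);
          exact key 2 3 (by decide); exact key 3 0 (by decide);
          exact key 3 1 (by decide); exact key 3 2 (by decide) ]
    haveI : Finite V := Finite.of_fintype V
    have hfin : (linesQM d).Finite := Set.toFinite _
    calc 4 ≤ (masks L).dedup.length := hcount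
      _ = (masks L).toFinset.card := (List.card_toFinset (masks L)).symm
      _ = (↑(masks L).toFinset : Set ℕ).ncard := (Set.ncard_coe_finset _).symm
      _ ≤ (μ '' linesQM d).ncard := Set.ncard_le_ncard hsub (hfin.image μ)
      _ ≤ (linesQM d).ncard := Set.ncard_image_le hfin
end

section
/- Every quasi-metric space on three points has the de Bruijn–Erdős property: it has a universal line or at least three distinct lines. -/
/-- every quasi-metric space on three points has the
de Bruijn–Erdős property: a universal line or at least three distinct lines. -/
theorem stmt_13 (V : Type) [Fintype V] (hV : Fintype.card V = 3)
    (d : V → V → ℝ) (hd : IsQuasiMetric d) :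
    (∃ x y : V, x ≠ y ∧ lineQM d x y = Set.univ) ∨ 3 ≤ (linesQM d).ncard := by
  obtain ⟨h0, heq, htri⟩ := hd
  have hdiag : ∀ x : V, d x x = 0 := fun x => (heq x x).mpr rfl
  have memx : ∀ x y : V, x ∈ lineQM d x y := by
    intro x y
    left
    rw [hdiag x]; ring
  have memy : ∀ x y : V, y ∈ lineQM d x y := by
    intro x y
    right; right
    rw [hdiag y]; ring
  have key : ∀ x y z : V, (∀ v : V, v = x ∨ v = y ∨ v = z) →
      lineQM d x y ≠ Set.univ → lineQM d x y = {x, y} := by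
    intro x y z hcov hne
    have hz : z ∉ lineQM d x y := by
      intro hz
      apply hne
      ext v
      simp only [Set.mem_univ, iff_true]
      rcases hcov v with rfl | rfl | rfl
      · exact memx _ _
      · exact memy _ _
      · exact hz
    ext v
    constructor
    · intro hv
      rcases hcov v with rfl | rfl | rfl
      · exact Set.mem_insert _ _
      · exact Set.mem_insert_of_mem _ rfl
      · exact absurd hv hz
    · rintro (rfl | rfl)
      · exact memx _ _
      · exact memy _ _
  classical
  obtain ⟨a, b, c, hab, hac, hbc, huniv⟩ := Finset.card_eq_three.mp hV
  have hcov : ∀ v : V, v = a ∨ v = b ∨ v = c := by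
    intro v
    have := huniv ▸ Finset.mem_univ v
    simpa using this
  by_cases h1 : lineQM d a b = Set.univ
  · exact Or.inl ⟨a, b, hab, h1⟩
  by_cases h2 : lineQM d a c = Set.univ
  · exact Or.inl ⟨a, c, hac, h2⟩
  by_cases h3 : lineQM d b c = Set.univ
  · exact Or.inl ⟨b, c, hbc, h3⟩
  right
  have e1 : lineQM d a b = {a, b} := key a b c hcov h1
  have e2 : lineQM d a c = {a, c} := key a c b (fun v => (hcov v).imp_right Or.symm) h2
  have e3 : lineQM d b c = {b, c} := key b c a (fun v => (hcov v).elim (fun h => Or.inr (Or.inr h)) (fun h => h.imp id Or.inl)) h3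
  have hsub : ({({a, b} : Set V), {a, c}, {b, c}} : Set (Set V)) ⊆ linesQM d := by
    rintro ℓ (rfl | rfl | rfl)
    · exact ⟨a, b, hab, e1.symm⟩
    · exact ⟨a, c, hac, e2.symm⟩
    · exact ⟨b, c, hbc, e3.symm⟩
  have hd1 : ({a, b} : Set V) ≠ {a, c} := by
    intro h
    have : b ∈ ({a, c} : Set V) := h ▸ Set.mem_insert_of_mem _ rfl
    rcases this with h' | h'
    · exact hab h'.symm
    · exact hbc h'
  have hd2 : ({a, b} : Set V) ≠ {b, c} := by
    intro h
    have : a ∈ ({b, c} : Set V) := h ▸ Set.mem_insert _ _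
    rcases this with h' | h'
    · exact hab h'
    · exact hac h'
  have hd3 : ({a, c} : Set V) ≠ {b, c} := by
    intro h
    have : a ∈ ({b, c} : Set V) := h ▸ Set.mem_insert _ _
    rcases this with h' | h'
    · exact hab h'
    · exact hac h'
  have hcard : ({({a, b} : Set V), {a, c}, {b, c}} : Set (Set V)).ncard = 3 :=
    Set.ncard_eq_three.mpr ⟨_, _, _, hd1, hd2, hd3, rfl⟩
  calc 3 = ({({a, b} : Set V), {a, c}, {b, c}} : Set (Set V)).ncard := hcard.symm
    _ ≤ (linesQM d).ncard := Set.ncard_le_ncard hsub (Set.toFinite _)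
end

section
/- Let (V, d) be a quasi-metric space on a four-element set with no universal line, and suppose a, b, c are pairwise distinct points with (a,b,c) ∈ B(d), i.e., d a c = d a b + d b c. Then line(a,b) = line(a,c) = line(b,c) = {a,b,c}. -/
lemma four_cover {V : Type} [Fintype V] [DecidableEq V] (hV : Fintype.card V = 4)
    (a b c p : V) (hab : a ≠ b) (hac : a ≠ c) (hap : a ≠ p)
    (hbc : b ≠ c) (hbp : b ≠ p) (hcp : c ≠ p) :
    ∀ q : V, q = a ∨ q = b ∨ q = c ∨ q = p := by
  intro q
  have hcard : ({a, b, c, p} : Finset V).card = 4 := by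
    rw [Finset.card_insert_of_notMem (by simp [hab, hac, hap]),
      Finset.card_insert_of_notMem (by simp [hbc, hbp]),
      Finset.card_insert_of_notMem (by simp [hcp])]
    simp
  have huniv : ({a, b, c, p} : Finset V) = Finset.univ :=
    Finset.eq_univ_of_card _ (by rw [hcard, hV])
  have : q ∈ ({a, b, c, p} : Finset V) := huniv ▸ Finset.mem_univ q
  simpa using this

/-- in a quasi-metric space on four points with no universal line,
if `(a, b, c)` is in the betweenness, then the lines through `a,b`, through `a,c`
and through `b,c` all equal `{a, b, c}`. -/
theorem stmt_16 (V : Type) [Fintype V] (hV : Fintype.card V = 4)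
    (d : V → V → ℝ) (hd : IsQuasiMetric d)
    (hnouniv : ∀ x y : V, x ≠ y → lineQM d x y ≠ Set.univ)
    (a b c : V) (h : BtwQM d a b c) :
    lineQM d a b = {a, b, c} ∧ lineQM d a c = {a, b, c} ∧ lineQM d b c = {a, b, c} := by
  classical
  obtain ⟨hpos, hzero, htri⟩ := hd
  obtain ⟨hab, hbc, hac, hbtw⟩ := h
  have hda : d a a = 0 := (hzero a a).mpr rfl
  have hdb : d b b = 0 := (hzero b b).mpr rfl
  have hdc : d c c = 0 := (hzero c c).mpr rfl
  have key : ∀ x y : V, x ≠ y → ({a, b, c} : Set V) ⊆ lineQM d x y →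
      lineQM d x y = {a, b, c} := by
    intro x y hxy hsub
    obtain ⟨p, hp⟩ : ∃ p, p ∉ lineQM d x y := by
      by_contra h'
      push_neg at h'
      exact hnouniv x y hxy (Set.eq_univ_of_forall h')
    have hpa : a ≠ p := fun h => hp (h ▸ hsub (by simp))
    have hpb : b ≠ p := fun h => hp (h ▸ hsub (by simp))
    have hpc : c ≠ p := fun h => hp (h ▸ hsub (by simp))
    apply Set.Subset.antisymm _ hsub
    intro q hq
    rcases four_cover hV a b c p hab hac hpa hbc hpb hpc q with rfl | rfl | rfl | rfl
    · simp
    · simp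
    · simp
    · exact absurd hq hp
  refine ⟨key a b hab ?_, key a c hac ?_, key b c hbc ?_⟩
  · intro z hz
    rcases hz with rfl | rfl | rfl
    · exact Or.inr (Or.inl (by rw [hda]; ring))
    · exact Or.inr (Or.inl (by rw [hdb]; ring))
    · exact Or.inr (Or.inr hbtw)
  · intro z hz
    rcases hz with rfl | rfl | rfl
    · exact Or.inr (Or.inl (by rw [hda]; ring))
    · exact Or.inr (Or.inl hbtw)
    · exact Or.inr (Or.inl (by rw [hdc]; ring))
  · intro z hz
    rcases hz with rfl | rfl | rfl
    · exact Or.inl hbtw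
    · exact Or.inr (Or.inl (by rw [hdb]; ring))
    · exact Or.inr (Or.inl (by rw [hdc]; ring))
end

section
/- Let (V, d) be a quasi-metric space on a four-element set whose betweenness B(d) is nonempty, and suppose some point w ∈ V occurs in no triple of B(d). Then (V, d) has at least four distinct lines. In particular, every quasi-metric space on four points with no universal line and at most three lines has the property that every point occurs in some triple of its betweenness. -/
lemma lineQM_mem_left {V : Type*} {d : V → V → ℝ} (hd : IsQuasiMetric d) (x y : V) :
    x ∈ lineQM d x y := by
  have : d x x = 0 := (hd.2.1 x x).2 rfl
  simp [lineQM, this]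

lemma lineQM_mem_right {V : Type*} {d : V → V → ℝ} (hd : IsQuasiMetric d) (x y : V) :
    y ∈ lineQM d x y := by
  have : d y y = 0 := (hd.2.1 y y).2 rfl
  simp [lineQM, this]

lemma lineQM_btw {V : Type*} {d : V → V → ℝ} {x y z : V}
    (hxy : x ≠ y) (hzx : z ≠ x) (hzy : z ≠ y) (hz : z ∈ lineQM d x y) :
    BtwQM d z x y ∨ BtwQM d x z y ∨ BtwQM d x y z := by
  rcases hz with h | h | h
  · exact Or.inl ⟨hzx, hxy, hzy, h⟩
  · exact Or.inr (Or.inl ⟨hzx.symm, hzy, hxy, h⟩)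
  · exact Or.inr (Or.inr ⟨hxy, hzy.symm, hzx.symm, h⟩)

lemma key_four_lines {V : Type*} [Fintype V] {d : V → V → ℝ} (hd : IsQuasiMetric d)
    {w a b c : V} (hab : a ≠ b) (hac : a ≠ c) (hbc : b ≠ c)
    (hwa : w ≠ a) (hwb : w ≠ b) (hwc : w ≠ c)
    (hw : ∀ x y z : V, BtwQM d x y z → w ≠ x ∧ w ≠ y ∧ w ≠ z) :
    4 ≤ (linesQM d).ncard := by
  -- every line through w is {w, u}
  have hline : ∀ u : V, w ≠ u → lineQM d w u = {w, u} := by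
    intro u hwu
    apply Set.Subset.antisymm
    · intro z hz
      by_contra hzmem
      simp only [Set.mem_insert_iff, Set.mem_singleton_iff, not_or] at hzmem
      obtain ⟨hzw, hzu⟩ := hzmem
      rcases lineQM_btw hwu (Ne.symm (Ne.symm hzw)) hzu hz with h | h | h
      · exact (hw _ _ _ h).2.1 rfl
      · exact (hw _ _ _ h).1 rfl
      · exact (hw _ _ _ h).1 rfl
    · intro z hz
      rcases hz with h | h
      · subst h; exact lineQM_mem_left hd _ _
      · simp only [Set.mem_singleton_iff] at h; subst h; exact lineQM_mem_right hd _ _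
  have hwab : w ∉ lineQM d a b := by
    intro hmem
    rcases lineQM_btw hab hwa hwb hmem with h | h | h
    · exact (hw _ _ _ h).1 rfl
    · exact (hw _ _ _ h).2.1 rfl
    · exact (hw _ _ _ h).2.2 rfl
  have h1 : ({w, a} : Set V) ∈ linesQM d := ⟨w, a, hwa, (hline a hwa).symm⟩
  have h2 : ({w, b} : Set V) ∈ linesQM d := ⟨w, b, hwb, (hline b hwb).symm⟩
  have h3 : ({w, c} : Set V) ∈ linesQM d := ⟨w, c, hwc, (hline c hwc).symm⟩
  have h4 : lineQM d a b ∈ linesQM d := ⟨a, b, hab, rfl⟩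
  -- distinctness
  have e12 : ({w, a} : Set V) ≠ {w, b} := by
    intro h
    have : a ∈ ({w, b} : Set V) := h ▸ (by simp : a ∈ ({w, a} : Set V))
    simp only [Set.mem_insert_iff, Set.mem_singleton_iff] at this
    rcases this with h' | h' <;> [exact hwa h'.symm; exact hab h']
  have e13 : ({w, a} : Set V) ≠ {w, c} := by
    intro h
    have : a ∈ ({w, c} : Set V) := h ▸ (by simp : a ∈ ({w, a} : Set V))
    simp only [Set.mem_insert_iff, Set.mem_singleton_iff] at this
    rcases this with h' | h' <;> [exact hwa h'.symm; exact hac h']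
  have e23 : ({w, b} : Set V) ≠ {w, c} := by
    intro h
    have : b ∈ ({w, c} : Set V) := h ▸ (by simp : b ∈ ({w, b} : Set V))
    simp only [Set.mem_insert_iff, Set.mem_singleton_iff] at this
    rcases this with h' | h' <;> [exact hwb h'.symm; exact hbc h']
  have e14 : ({w, a} : Set V) ≠ lineQM d a b := by
    intro h; exact hwab (h ▸ (by simp : w ∈ ({w, a} : Set V)))
  have e24 : ({w, b} : Set V) ≠ lineQM d a b := by
    intro h; exact hwab (h ▸ (by simp : w ∈ ({w, b} : Set V)))
  have e34 : ({w, c} : Set V) ≠ lineQM d a b := by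
    intro h; exact hwab (h ▸ (by simp : w ∈ ({w, c} : Set V)))
  have hsub : ({({w, a} : Set V), {w, b}, {w, c}, lineQM d a b} : Set (Set V)) ⊆ linesQM d := by
    intro ℓ hℓ
    rcases hℓ with h | h | h | h <;> simp_all
  have hcard : ({({w, a} : Set V), {w, b}, {w, c}, lineQM d a b} : Set (Set V)).ncard = 4 := by
    rw [Set.ncard_insert_of_notMem (by simp [e12, e13, e14]),
        Set.ncard_insert_of_notMem (by simp [e23, e24]),
        Set.ncard_insert_of_notMem (by simp [e34]),
        Set.ncard_singleton]
  calc 4 = ({({w, a} : Set V), {w, b}, {w, c}, lineQM d a b} : Set (Set V)).ncard := hcard.symm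
    _ ≤ (linesQM d).ncard := Set.ncard_le_ncard hsub (Set.toFinite _)

/-- in a quasi-metric space on four points with nonempty
betweenness, if some point occurs in no triple of the betweenness, then the space
has at least four distinct lines.  In particular, in a quasi-metric space on four
points with no universal line and at most three lines, every point occurs in some
triple of the betweenness. -/
theorem stmt_17 :
    (∀ (V : Type) (_ : Fintype V), Fintype.card V = 4 →
      ∀ d : V → V → ℝ, IsQuasiMetric d →
      (∃ x y z : V, BtwQM d x y z) →
      ∀ w : V, (∀ x y z : V, BtwQM d x y z → w ≠ x ∧ w ≠ y ∧ w ≠ z) →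
      4 ≤ (linesQM d).ncard) ∧
    (∀ (V : Type) (_ : Fintype V), Fintype.card V = 4 →
      ∀ d : V → V → ℝ, IsQuasiMetric d →
      (∀ x y : V, x ≠ y → lineQM d x y ≠ Set.univ) →
      (linesQM d).ncard ≤ 3 →
      ∀ w : V, ∃ x y z : V, BtwQM d x y z ∧ (w = x ∨ w = y ∨ w = z)) := by
  constructor
  · intro V _ _hcard d hd hB w hw
    obtain ⟨a, b, c, hBabc⟩ := hB
    obtain ⟨hab, hbc, hac, -⟩ := id hBabc
    obtain ⟨hwa, hwb, hwc⟩ := hw a b c hBabc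
    exact key_four_lines hd hab hac hbc hwa hwb hwc hw
  · intro V _ hcard d hd _huniv hle w
    by_contra hcon
    push_neg at hcon
    have hw : ∀ x y z : V, BtwQM d x y z → w ≠ x ∧ w ≠ y ∧ w ≠ z := by
      intro x y z hB
      have := hcon x y z hB
      tauto
    -- find three points distinct from w
    classical
    have hcompl : ({w}ᶜ : Finset V).card = 3 := by
      rw [Finset.card_compl, Finset.card_singleton, hcard]
    obtain ⟨a, b, c, hab, hac, hbc, habc⟩ := Finset.card_eq_three.mp hcompl
    have hwa : w ≠ a := by
      have : a ∈ ({w}ᶜ : Finset V) := by rw [habc]; simp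
      simp at this; exact (Ne.symm this)
    have hwb : w ≠ b := by
      have : b ∈ ({w}ᶜ : Finset V) := by rw [habc]; simp
      simp at this; exact (Ne.symm this)
    have hwc : w ≠ c := by
      have : c ∈ ({w}ᶜ : Finset V) := by rw [habc]; simp
      simp at this; exact (Ne.symm this)
    have := key_four_lines hd hab hac hbc hwa hwb hwc hw
    omega
end

section
/- Let (V, d) be a quasi-metric space on a three-element set V = {a,b,c}. Then: if B(d) = ∅ the space has exactly 3 distinct lines; if B(d) = {(a,b,c)} it has exactly 4 distinct lines; if B(d) = {(a,b,c),(b,c,a)} it has exactly 2 distinct lines; if B(d) = {(a,b,c),(c,b,a)} it has exactly 1 line, which is universal; and if B(d) = {(a,b,c),(b,c,a),(c,a,b)} it has exactly 1 line, which is universal. -/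
section Helpers

variable {V : Type} (d : V → V → ℝ)

lemma dxx (hd : IsQuasiMetric d) (x : V) : d x x = 0 := (hd.2.1 x x).2 rfl

lemma mem_line_left (hd : IsQuasiMetric d) (x y : V) : x ∈ lineQM d x y := by
  right; left; rw [dxx d hd]; ring

lemma mem_line_right (hd : IsQuasiMetric d) (x y : V) : y ∈ lineQM d x y := by
  right; left; rw [dxx d hd]; ring

lemma third_mem_iff (x y w : V) (hxy : x ≠ y) (hxw : x ≠ w) (hyw : y ≠ w) :
    w ∈ lineQM d x y ↔ BtwQM d w x y ∨ BtwQM d x w y ∨ BtwQM d x y w := by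
  unfold lineQM BtwQM
  simp only [Set.mem_setOf_eq]
  constructor
  · rintro (h | h | h)
    · exact Or.inl ⟨hxw.symm, hxy, hyw.symm, h⟩
    · exact Or.inr (Or.inl ⟨hxw, hyw.symm, hxy, h⟩)
    · exact Or.inr (Or.inr ⟨hxy, hyw, hxw, h⟩)
  · rintro (⟨_, _, _, h⟩ | ⟨_, _, _, h⟩ | ⟨_, _, _, h⟩)
    exacts [Or.inl h, Or.inr (Or.inl h), Or.inr (Or.inr h)]

lemma line_eq_univ (hd : IsQuasiMetric d) (x y w : V)
    (hV : ∀ z : V, z = x ∨ z = y ∨ z = w) (h : w ∈ lineQM d x y) :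
    lineQM d x y = Set.univ := by
  ext z
  simp only [Set.mem_univ, iff_true]
  rcases hV z with rfl | rfl | rfl
  · exact mem_line_left d hd _ _
  · exact mem_line_right d hd _ _
  · exact h

lemma line_eq_pair (hd : IsQuasiMetric d) (x y w : V)
    (hV : ∀ z : V, z = x ∨ z = y ∨ z = w) (h : w ∉ lineQM d x y) :
    lineQM d x y = {x, y} := by
  ext z
  simp only [Set.mem_insert_iff, Set.mem_singleton_iff]
  constructor
  · intro hz
    rcases hV z with rfl | rfl | rfl
    · exact Or.inl rfl
    · exact Or.inr rfl
    · exact absurd hz h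
  · rintro (rfl | rfl)
    · exact mem_line_left d hd _ _
    · exact mem_line_right d hd _ _

lemma lines_eq (a b c : V) (hab : a ≠ b) (hbc : b ≠ c) (hac : a ≠ c)
    (hV : ∀ x : V, x = a ∨ x = b ∨ x = c) :
    linesQM d = {lineQM d a b, lineQM d b a, lineQM d b c,
                 lineQM d c b, lineQM d a c, lineQM d c a} := by
  ext ℓ
  simp only [linesQM, Set.mem_setOf_eq, Set.mem_insert_iff, Set.mem_singleton_iff]
  constructor
  · rintro ⟨x, y, hxy, rfl⟩
    rcases hV x with rfl | rfl | rfl <;> rcases hV y with rfl | rfl | rfl <;>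
      first | exact absurd rfl hxy | tauto
  · rintro (rfl | rfl | rfl | rfl | rfl | rfl)
    exacts [⟨a, b, hab, rfl⟩, ⟨b, a, hab.symm, rfl⟩, ⟨b, c, hbc, rfl⟩,
      ⟨c, b, hbc.symm, rfl⟩, ⟨a, c, hac, rfl⟩, ⟨c, a, hac.symm, rfl⟩]

end Helpers

/-- line counts of quasi-metric spaces on a three-element set
`{a, b, c}` according to their betweenness: `∅` gives exactly 3 lines,
`{(a,b,c)}` gives 4, `{(a,b,c),(b,c,a)}` gives 2, `{(a,b,c),(c,b,a)}` gives a
single line which is universal, and `{(a,b,c),(b,c,a),(c,a,b)}` gives a single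
line which is universal. -/
theorem stmt_19 (V : Type) (d : V → V → ℝ) (hd : IsQuasiMetric d)
    (a b c : V) (hab : a ≠ b) (hbc : b ≠ c) (hac : a ≠ c)
    (hV : ∀ x : V, x = a ∨ x = b ∨ x = c) :
    ({t : V × V × V | BtwQM d t.1 t.2.1 t.2.2} = ∅ → (linesQM d).ncard = 3) ∧
    ({t : V × V × V | BtwQM d t.1 t.2.1 t.2.2} = {(a, b, c)} →
      (linesQM d).ncard = 4) ∧
    ({t : V × V × V | BtwQM d t.1 t.2.1 t.2.2} = {(a, b, c), (b, c, a)} →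
      (linesQM d).ncard = 2) ∧
    ({t : V × V × V | BtwQM d t.1 t.2.1 t.2.2} = {(a, b, c), (c, b, a)} →
      linesQM d = {(Set.univ : Set V)}) ∧
    ({t : V × V × V | BtwQM d t.1 t.2.1 t.2.2} = {(a, b, c), (b, c, a), (c, a, b)} →
      linesQM d = {(Set.univ : Set V)}) := by
  have hba := hab.symm
  have hcb := hbc.symm
  have hca := hac.symm
  have hVab : ∀ z : V, z = a ∨ z = b ∨ z = c := hV
  have hVba : ∀ z : V, z = b ∨ z = a ∨ z = c := fun z => by rcases hV z with h | h | h <;> tauto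
  have hVbc : ∀ z : V, z = b ∨ z = c ∨ z = a := fun z => by rcases hV z with h | h | h <;> tauto
  have hVcb : ∀ z : V, z = c ∨ z = b ∨ z = a := fun z => by rcases hV z with h | h | h <;> tauto
  have hVac : ∀ z : V, z = a ∨ z = c ∨ z = b := fun z => by rcases hV z with h | h | h <;> tauto
  have hVca : ∀ z : V, z = c ∨ z = a ∨ z = b := fun z => by rcases hV z with h | h | h <;> tauto
  have hLrw := lines_eq d a b c hab hbc hac hV
  -- non-membership facts for ncard computations
  have nePab_bc : ({a, b} : Set V) ≠ {b, c} := by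
    simp [Set.pair_eq_pair_iff, hab, hac, hba, hbc]
  have nePab_ac : ({a, b} : Set V) ≠ {a, c} := by
    simp [Set.pair_eq_pair_iff, hab, hbc, hba, hac]
  have nePbc_ac : ({b, c} : Set V) ≠ {a, c} := by
    simp [Set.pair_eq_pair_iff, hba, hbc, hca, hcb]
  have neU : ∀ x y : V, (Set.univ : Set V) ≠ ({x, y} : Set V) := by
    intro x y h
    have h1 := h ▸ (Set.mem_univ a)
    have h2 := h ▸ (Set.mem_univ b)
    have h3 := h ▸ (Set.mem_univ c)
    simp only [Set.mem_insert_iff, Set.mem_singleton_iff] at h1 h2 h3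
    rcases h1 with h1 | h1 <;> rcases h2 with h2 | h2 <;> rcases h3 with h3 | h3 <;>
      first
      | exact hab (h1.trans h2.symm)
      | exact hbc (h2.trans h3.symm)
      | exact hac (h1.trans h3.symm)
  refine ⟨?_, ?_, ?_, ?_, ?_⟩
  -- Case 1 : empty betweenness, 3 lines
  · intro hS
    have hB : ∀ p q r : V, ¬ BtwQM d p q r := by
      intro p q r h
      have : (p, q, r) ∈ ({t : V × V × V | BtwQM d t.1 t.2.1 t.2.2}) := h
      rw [hS] at this
      exact this
    have notmem : ∀ x y w : V, x ≠ y → x ≠ w → y ≠ w → w ∉ lineQM d x y := by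
      intro x y w h1 h2 h3 h
      rw [third_mem_iff d x y w h1 h2 h3] at h
      rcases h with h | h | h <;> exact hB _ _ _ h
    have l1 := line_eq_pair d hd a b c hVab (notmem a b c hab hac hbc)
    have l2 := line_eq_pair d hd b a c hVba (notmem b a c hba hbc hac)
    have l3 := line_eq_pair d hd b c a hVbc (notmem b c a hbc hba hca)
    have l4 := line_eq_pair d hd c b a hVcb (notmem c b a hcb hca hba)
    have l5 := line_eq_pair d hd a c b hVac (notmem a c b hac hab hcb)
    have l6 := line_eq_pair d hd c a b hVca (notmem c a b hca hcb hab)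
    have heq : linesQM d = {{a, b}, {b, c}, {a, c}} := by
      rw [hLrw, l1, l2, l3, l4, l5, l6, Set.pair_comm b a, Set.pair_comm c b,
        Set.pair_comm c a]
      ext s
      simp only [Set.mem_insert_iff, Set.mem_singleton_iff]
      tauto
    rw [heq, Set.ncard_insert_of_notMem (by simp [nePab_bc, nePab_ac]),
      Set.ncard_pair nePbc_ac]
  -- Case 2 : {(a,b,c)}, 4 lines
  · intro hS
    have hBiff : ∀ p q r : V, BtwQM d p q r ↔ ((p, q, r) : V × V × V) = (a, b, c) := by
      intro p q r
      have := Set.ext_iff.mp hS (p, q, r)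
      simpa using this
    have habc : BtwQM d a b c := (hBiff a b c).mpr rfl
    have notmem : ∀ x y w : V, x ≠ y → x ≠ w → y ≠ w →
        ((w, x, y) : V × V × V) ≠ (a, b, c) → ((x, w, y) : V × V × V) ≠ (a, b, c) →
        ((x, y, w) : V × V × V) ≠ (a, b, c) → w ∉ lineQM d x y := by
      intro x y w h1 h2 h3 n1 n2 n3 h
      rw [third_mem_iff d x y w h1 h2 h3] at h
      rcases h with h | h | h
      exacts [n1 ((hBiff _ _ _).mp h), n2 ((hBiff _ _ _).mp h), n3 ((hBiff _ _ _).mp h)]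
    have l1 := line_eq_univ d hd a b c hVab
      ((third_mem_iff d a b c hab hac hbc).mpr (Or.inr (Or.inr habc)))
    have l3 := line_eq_univ d hd b c a hVbc
      ((third_mem_iff d b c a hbc hba hca).mpr (Or.inl habc))
    have l5 := line_eq_univ d hd a c b hVac
      ((third_mem_iff d a c b hac hab hcb).mpr (Or.inr (Or.inl habc)))
    have l2 := line_eq_pair d hd b a c hVba (notmem b a c hba hbc hac
      (by simp [Prod.ext_iff, hca]) (by simp [Prod.ext_iff, hba]) (by simp [Prod.ext_iff, hba]))
    have l4 := line_eq_pair d hd c b a hVcb (notmem c b a hcb hca hba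
      (by simp [Prod.ext_iff, hcb]) (by simp [Prod.ext_iff, hca]) (by simp [Prod.ext_iff, hca]))
    have l6 := line_eq_pair d hd c a b hVca (notmem c a b hca hcb hab
      (by simp [Prod.ext_iff, hba]) (by simp [Prod.ext_iff, hca]) (by simp [Prod.ext_iff, hca]))
    have heq : linesQM d = {Set.univ, {a, b}, {b, c}, {a, c}} := by
      rw [hLrw, l1, l2, l3, l4, l5, l6, Set.pair_comm b a, Set.pair_comm c b,
        Set.pair_comm c a]
      ext s
      simp only [Set.mem_insert_iff, Set.mem_singleton_iff]
      tauto
    rw [heq,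
      Set.ncard_insert_of_notMem (by simp [neU a b, neU b c, neU a c]),
      Set.ncard_insert_of_notMem (by simp [nePab_bc, nePab_ac]),
      Set.ncard_pair nePbc_ac]
  -- Case 3 : {(a,b,c),(b,c,a)}, 2 lines
  · intro hS
    have hBiff : ∀ p q r : V, BtwQM d p q r ↔
        (((p, q, r) : V × V × V) = (a, b, c) ∨ ((p, q, r) : V × V × V) = (b, c, a)) := by
      intro p q r
      have := Set.ext_iff.mp hS (p, q, r)
      simpa using this
    have habc : BtwQM d a b c := (hBiff a b c).mpr (Or.inl rfl)
    have hbca : BtwQM d b c a := (hBiff b c a).mpr (Or.inr rfl)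
    have l1 := line_eq_univ d hd a b c hVab
      ((third_mem_iff d a b c hab hac hbc).mpr (Or.inr (Or.inr habc)))
    have l2 := line_eq_univ d hd b a c hVba
      ((third_mem_iff d b a c hba hbc hac).mpr (Or.inr (Or.inl hbca)))
    have l3 := line_eq_univ d hd b c a hVbc
      ((third_mem_iff d b c a hbc hba hca).mpr (Or.inl habc))
    have l5 := line_eq_univ d hd a c b hVac
      ((third_mem_iff d a c b hac hab hcb).mpr (Or.inr (Or.inl habc)))
    have l6 := line_eq_univ d hd c a b hVca
      ((third_mem_iff d c a b hca hcb hab).mpr (Or.inl hbca))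
    have l4 := line_eq_pair d hd c b a hVcb (by
      intro h
      rw [third_mem_iff d c b a hcb hca hba] at h
      rcases h with h | h | h <;>
        · rcases (hBiff _ _ _).mp h with h' | h' <;>
            simp [Prod.ext_iff, hab, hbc, hac, hba, hcb, hca] at h')
    have heq : linesQM d = {Set.univ, {b, c}} := by
      rw [hLrw, l1, l2, l3, l4, l5, l6, Set.pair_comm c b]
      ext s
      simp only [Set.mem_insert_iff, Set.mem_singleton_iff]
      tauto
    rw [heq, Set.ncard_pair (neU b c)]
  -- Case 4 : {(a,b,c),(c,b,a)}, single universal line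
  · intro hS
    have hBiff : ∀ p q r : V, BtwQM d p q r ↔
        (((p, q, r) : V × V × V) = (a, b, c) ∨ ((p, q, r) : V × V × V) = (c, b, a)) := by
      intro p q r
      have := Set.ext_iff.mp hS (p, q, r)
      simpa using this
    have habc : BtwQM d a b c := (hBiff a b c).mpr (Or.inl rfl)
    have hcba : BtwQM d c b a := (hBiff c b a).mpr (Or.inr rfl)
    have l1 := line_eq_univ d hd a b c hVab
      ((third_mem_iff d a b c hab hac hbc).mpr (Or.inr (Or.inr habc)))
    have l2 := line_eq_univ d hd b a c hVba
      ((third_mem_iff d b a c hba hbc hac).mpr (Or.inl hcba))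
    have l3 := line_eq_univ d hd b c a hVbc
      ((third_mem_iff d b c a hbc hba hca).mpr (Or.inl habc))
    have l4 := line_eq_univ d hd c b a hVcb
      ((third_mem_iff d c b a hcb hca hba).mpr (Or.inr (Or.inr hcba)))
    have l5 := line_eq_univ d hd a c b hVac
      ((third_mem_iff d a c b hac hab hcb).mpr (Or.inr (Or.inl habc)))
    have l6 := line_eq_univ d hd c a b hVca
      ((third_mem_iff d c a b hca hcb hab).mpr (Or.inr (Or.inl hcba)))
    rw [hLrw, l1, l2, l3, l4, l5, l6]
    simp
  -- Case 5 : cyclic betweenness, single universal line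
  · intro hS
    have hBiff : ∀ p q r : V, BtwQM d p q r ↔
        (((p, q, r) : V × V × V) = (a, b, c) ∨ ((p, q, r) : V × V × V) = (b, c, a) ∨
          ((p, q, r) : V × V × V) = (c, a, b)) := by
      intro p q r
      have := Set.ext_iff.mp hS (p, q, r)
      simpa using this
    have habc : BtwQM d a b c := (hBiff a b c).mpr (Or.inl rfl)
    have hbca : BtwQM d b c a := (hBiff b c a).mpr (Or.inr (Or.inl rfl))
    have hcab : BtwQM d c a b := (hBiff c a b).mpr (Or.inr (Or.inr rfl))
    have l1 := line_eq_univ d hd a b c hVab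
      ((third_mem_iff d a b c hab hac hbc).mpr (Or.inr (Or.inr habc)))
    have l2 := line_eq_univ d hd b a c hVba
      ((third_mem_iff d b a c hba hbc hac).mpr (Or.inr (Or.inl hbca)))
    have l3 := line_eq_univ d hd b c a hVbc
      ((third_mem_iff d b c a hbc hba hca).mpr (Or.inl habc))
    have l4 := line_eq_univ d hd c b a hVcb
      ((third_mem_iff d c b a hcb hca hba).mpr (Or.inr (Or.inl hcab)))
    have l5 := line_eq_univ d hd a c b hVac
      ((third_mem_iff d a c b hac hab hcb).mpr (Or.inr (Or.inl habc)))
    have l6 := line_eq_univ d hd c a b hVca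
      ((third_mem_iff d c a b hca hcb hab).mpr (Or.inr (Or.inr hcab)))
    rw [hLrw, l1, l2, l3, l4, l5, l6]
    simp
end
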